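/- Let n, m, r, d be natural numbers with r ≤ m ≤ n, let p₀,…,pₙ ∈ ℝᵈ and q₀,…,qₘ ∈ ℝᵈ, and set P(u) = Σ_{i=0}^{n} pᵢ Bⁿᵢ(u), Q(u) = Σ_{j=0}^{m} qⱼ Bᵐⱼ(u). Then the derivatives of Q and P agree at u = 0 up to order r, i.e., Q⁽ʲ⁾(0) = P⁽ʲ⁾(0) for j = 0,1,…,r, if and only if for each j = 0,1,…,r: qⱼ = C(n,j) C(m,j)^{-1} Δʲp₀ − Σ_{h=0}^{j−1} (−1)^{j+h} C(j,h) q_h, where Δʲ denotes the iterated forward difference on the control points. -/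

import Mathlib

open Finset intervalIntegral

/-- The Bernstein basis polynomial `B^n_j(u) = C(n,j) u^j (1-u)^(n-j)`. -/
noncomputable def bern (n j : ℕ) (u : ℝ) : ℝ := (n.choose j : ℝ) * u ^ j * (1 - u) ^ (n - j)

/-- Iterated forward difference `Δ^j α_k` acting on the indices of control points. -/
noncomputable def fdiffE (d : ℕ) : ℕ → (ℕ → EuclideanSpace ℝ (Fin d)) → ℕ → EuclideanSpace ℝ (Fin d)
  | 0, w, k => w k
  | j + 1, w, k => fdiffE d j w (k + 1) - fdiffE d j w k

private lemma neg_one_pow_sub_eq {i j : ℕ} (h : i ≤ j) :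
    (-1 : ℝ) ^ (j - i) = (-1 : ℝ) ^ (j + i) := by
  have hji : j + i = (j - i) + 2 * i := by omega
  rw [hji, pow_add, pow_mul]
  norm_num

open Polynomial in
private lemma coeff_one_sub_X_pow (k t : ℕ) :
    ((1 - X : ℝ[X]) ^ k).coeff t = (-1 : ℝ) ^ t * (k.choose t) := by
  have h : (1 - X : ℝ[X]) = -(X + C (-1)) := by
    rw [map_neg, map_one]; ring
  rw [h, neg_pow, show ((-1 : ℝ[X])) ^ k = C ((-1 : ℝ) ^ k) by rw [map_pow, map_neg, map_one],
    coeff_C_mul, coeff_X_add_C_pow]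
  by_cases htk : t ≤ k
  · have : (-1 : ℝ) ^ k = (-1 : ℝ) ^ (k - t) * (-1 : ℝ) ^ t := by
      rw [← pow_add]; congr 1; omega
    rw [this]
    ring_nf
    rw [show (k - t) * 2 = 2 * (k - t) by ring, pow_mul]
    norm_num
  · rw [Nat.choose_eq_zero_of_lt (by omega)]
    simp

open Polynomial in
private lemma bern_eval_deriv0 (n i j : ℕ) (hj : j ≤ n) :
    (derivative^[j] (bernsteinPolynomial ℝ n i)).eval 0
      = (j.factorial : ℝ) * ((-1 : ℝ) ^ (j + i) * (j.choose i) * (n.choose j)) := by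
  by_cases hij : i ≤ j
  · rw [← coeff_zero_eq_eval_zero, coeff_iterate_derivative]
    have hb : bernsteinPolynomial ℝ n i
        = (C ((n.choose i : ℝ)) * (1 - X) ^ (n - i)) * X ^ i := by
      rw [bernsteinPolynomial, ← C_eq_natCast]; ring
    rw [hb]
    rw [zero_add, Nat.descFactorial_self, coeff_mul_X_pow', if_pos hij, coeff_C_mul,
      coeff_one_sub_X_pow, nsmul_eq_mul]
    have hcm := Nat.choose_mul (n := n) hij
    have hcm' : (n.choose j : ℝ) * (j.choose i : ℝ)
        = (n.choose i : ℝ) * ((n - i).choose (j - i) : ℝ) := by exact_mod_cast hcm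
    rw [neg_one_pow_sub_eq hij]
    linear_combination (j.factorial : ℝ) * (-1 : ℝ) ^ (j + i) * hcm'.symm
  · push_neg at hij
    rw [bernsteinPolynomial.iterate_derivative_at_0_eq_zero_of_lt ℝ n hij,
      Nat.choose_eq_zero_of_lt hij]
    simp

private lemma iter_deriv_sum {d : ℕ} (s : Finset ℕ) (P : ℕ → Polynomial ℝ)
    (c : ℕ → EuclideanSpace ℝ (Fin d)) (j : ℕ) :
    iteratedDeriv j (fun u : ℝ => ∑ i ∈ s, (P i).eval u • c i)
      = fun x => ∑ i ∈ s, ((Polynomial.derivative^[j] (P i)).eval x) • c i := by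
  induction j with
  | zero => simp
  | succ j ih =>
    rw [iteratedDeriv_succ, ih]
    funext x
    rw [deriv_fun_sum (fun i _ => ((Polynomial.differentiable _).differentiableAt).smul_const _)]
    refine Finset.sum_congr rfl fun i _ => ?_
    rw [deriv_smul_const (Polynomial.differentiableAt _), Polynomial.deriv,
      Function.iterate_succ_apply']

private lemma fdiffE_eq_fwdDiff {d : ℕ} (j : ℕ) (w : ℕ → EuclideanSpace ℝ (Fin d)) (k : ℕ) :
    fdiffE d j w k = (fwdDiff (1 : ℕ))^[j] w k := by
  induction j generalizing k with
  | zero => rfl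
  | succ j ih =>
    show fdiffE d j w (k + 1) - fdiffE d j w k = _
    rw [ih, ih, Function.iterate_succ_apply']
    rfl

private lemma fdiffE_eq_sum {d : ℕ} (j : ℕ) (w : ℕ → EuclideanSpace ℝ (Fin d)) (k : ℕ) :
    fdiffE d j w k
      = ∑ i ∈ range (j + 1), ((-1 : ℝ) ^ (j + i) * (j.choose i)) • w (k + i) := by
  rw [fdiffE_eq_fwdDiff, fwdDiff_iter_eq_sum_shift]
  refine Finset.sum_congr rfl fun i hi => ?_
  have hij : i ≤ j := Nat.lt_succ_iff.mp (mem_range.mp hi)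
  rw [smul_eq_mul, mul_one, ← Int.cast_smul_eq_zsmul ℝ]
  congr 1
  push_cast
  rw [neg_one_pow_sub_eq hij]

private lemma deriv_bern_sum {d : ℕ} (n j : ℕ) (hj : j ≤ n)
    (w : ℕ → EuclideanSpace ℝ (Fin d)) :
    iteratedDeriv j (fun u : ℝ => ∑ i ∈ range (n + 1), bern n i u • w i) 0
      = ((j.factorial : ℝ) * (n.choose j)) • fdiffE d j w 0 := by
  have hbern : ∀ i (u : ℝ), bern n i u = (bernsteinPolynomial ℝ n i).eval u := by
    intro i u
    simp [bern, bernsteinPolynomial]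
  simp only [hbern]
  rw [iter_deriv_sum (range (n + 1)) (fun i => bernsteinPolynomial ℝ n i) w j]
  beta_reduce
  rw [fdiffE_eq_sum, Finset.smul_sum]
  rw [← Finset.sum_subset (Finset.range_subset_range.mpr (by omega) : range (j + 1) ⊆ range (n + 1))
    (fun i _ hi => by
      have : j < i := by simpa [Nat.lt_succ_iff] using hi
      rw [bern_eval_deriv0 n i j hj, Nat.choose_eq_zero_of_lt this]
      simp)]
  refine Finset.sum_congr rfl fun i _ => ?_
  rw [bern_eval_deriv0 n i j hj, smul_smul, zero_add]
  congr 1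
  ring

theorem constraints_at_zero_iff (n m r d : ℕ) (hrm : r ≤ m) (hmn : m ≤ n)
    (p q : ℕ → EuclideanSpace ℝ (Fin d)) :
    (∀ j ≤ r,
        iteratedDeriv j (fun u : ℝ => ∑ i ∈ range (m + 1), bern m i u • q i) 0
          = iteratedDeriv j (fun u : ℝ => ∑ i ∈ range (n + 1), bern n i u • p i) 0) ↔
    (∀ j ≤ r,
        q j = ((n.choose j : ℝ) * ((m.choose j : ℝ))⁻¹) • fdiffE d j p 0
          - ∑ h ∈ range j, ((-1 : ℝ) ^ (j + h) * (j.choose h : ℝ)) • q h) := by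
  refine forall₂_congr fun j hj => ?_
  have hjm : j ≤ m := hj.trans hrm
  have hjn : j ≤ n := hjm.trans hmn
  rw [deriv_bern_sum m j hjm q, deriv_bern_sum n j hjn p]
  have hq : fdiffE d j q 0
      = q j + ∑ h ∈ range j, ((-1 : ℝ) ^ (j + h) * (j.choose h : ℝ)) • q h := by
    rw [fdiffE_eq_sum, Finset.sum_range_succ]
    have h1 : ((-1 : ℝ) ^ (j + j) * (j.choose j : ℝ)) = 1 := by
      rw [Nat.choose_self, ← two_mul, pow_mul]
      norm_num
    rw [h1, zero_add, one_smul, add_comm]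
    simp
  have hfac : (0 : ℝ) < j.factorial := by exact_mod_cast j.factorial_pos
  have hcm : (0 : ℝ) < m.choose j := by exact_mod_cast Nat.choose_pos hjm
  have ha : ((j.factorial : ℝ) * (m.choose j : ℝ)) ≠ 0 := (mul_pos hfac hcm).ne'
  have key : ∀ x y : EuclideanSpace ℝ (Fin d),
      (((j.factorial : ℝ) * (m.choose j : ℝ)) • x = ((j.factorial : ℝ) * (n.choose j : ℝ)) • y
        ↔ x = ((n.choose j : ℝ) * ((m.choose j : ℝ))⁻¹) • y) := by
    intro x y
    constructor
    · intro h
      have := congrArg (fun v => (((j.factorial : ℝ) * (m.choose j : ℝ))⁻¹) • v) h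
      simp only [inv_smul_smul₀ ha, smul_smul] at this
      rw [this]
      congr 1
      field_simp
    · intro h
      rw [h, smul_smul]
      congr 1
      field_simp
  rw [key, hq, eq_sub_iff_add_eq]
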